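/- (Conservation law for V₂, homogeneous case.) Let u be a C² solution of Δ_{H¹}u = 0 on an open set Ω ⊆ ℝ³. Define on Ω: B₁ = −½(t−4xy)u_x² + ½(t−4xy)u_y² + [2t(x²+3y²)−4xy(x²+y²)]u_t² − (3x²−y²)u_x u_y + 2(x³+ty+xy²)u_x u_t − 2(tx−x²y−y³)u_y u_t + 2y·u·u_x + 4y²·u·u_t; B₂ = ½(3x²−y²)u_x² − ½(3x²−y²)u_y² + 2(x⁴−2txy−y⁴)u_t² − (t−4xy)u_x u_y + 2(tx−x²y−y³)u_x u_t + 2(x³+ty+xy²)u_y u_t + 2y·u·u_y − 4xy·u·u_t − u²; B₃ = (7xy²−x³−3ty)u_x² + (5x³−3xy²−ty)u_y² + 4(x²+y²)(x³+ty+xy²)u_t² + 2(tx−7x²y+y³)u_x u_y − 4(t−4xy)(x²+y²)u_x u_t − 4(3x⁴+2x²y²−y⁴)u_y u_t + 2x·u² + 4y²·u·u_x − 4xy·u·u_y + 8y(x²+y²)·u·u_t. Then ∂B₁/∂x + ∂B₂/∂y + ∂B₃/∂t = 0 at every point of Ω. -/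

import Mathlib

/-- Partial derivative with respect to the first coordinate (x). -/
noncomputable def pdx (u : ℝ × ℝ × ℝ → ℝ) : ℝ × ℝ × ℝ → ℝ :=
  fun p => fderiv ℝ u p (1, 0, 0)

/-- Partial derivative with respect to the second coordinate (y). -/
noncomputable def pdy (u : ℝ × ℝ × ℝ → ℝ) : ℝ × ℝ × ℝ → ℝ :=
  fun p => fderiv ℝ u p (0, 1, 0)

/-- Partial derivative with respect to the third coordinate (t). -/
noncomputable def pdt (u : ℝ × ℝ × ℝ → ℝ) : ℝ × ℝ × ℝ → ℝ :=
  fun p => fderiv ℝ u p (0, 0, 1)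

/-- The Kohn–Laplace operator on the Heisenberg group H¹:
`Δ u = u_xx + u_yy + 4(x²+y²) u_tt + 4y u_xt − 4x u_yt`. -/
noncomputable def KohnLaplace (u : ℝ × ℝ × ℝ → ℝ) : ℝ × ℝ × ℝ → ℝ :=
  fun p => pdx (pdx u) p + pdy (pdy u) p
    + 4 * (p.1 ^ 2 + p.2.1 ^ 2) * pdt (pdt u) p
    + 4 * p.2.1 * pdt (pdx u) p - 4 * p.1 * pdt (pdy u) p

lemma fd_coord1 (p w : ℝ × ℝ × ℝ) : fderiv ℝ (fun q : ℝ×ℝ×ℝ => q.1) p w = w.1 := by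
  rw [show (fun q : ℝ×ℝ×ℝ => q.1) = Prod.fst from rfl, fderiv_fst]; rfl

lemma fd_coord2 (p w : ℝ × ℝ × ℝ) : fderiv ℝ (fun q : ℝ×ℝ×ℝ => q.2.1) p w = w.2.1 := by
  have h : HasFDerivAt (fun q : ℝ×ℝ×ℝ => q.2.1)
      ((ContinuousLinearMap.fst ℝ ℝ ℝ).comp (ContinuousLinearMap.snd ℝ ℝ (ℝ×ℝ))) p :=
    hasFDerivAt_fst.comp p hasFDerivAt_snd
  rw [h.fderiv]; rfl

lemma fd_coord3 (p w : ℝ × ℝ × ℝ) : fderiv ℝ (fun q : ℝ×ℝ×ℝ => q.2.2) p w = w.2.2 := by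
  have h : HasFDerivAt (fun q : ℝ×ℝ×ℝ => q.2.2)
      ((ContinuousLinearMap.snd ℝ ℝ ℝ).comp (ContinuousLinearMap.snd ℝ ℝ (ℝ×ℝ))) p :=
    hasFDerivAt_snd.comp p hasFDerivAt_snd
  rw [h.fderiv]; rfl

set_option maxHeartbeats 4000000 in
/-- conservation law for the Noether symmetry V₂ of the
homogeneous Kohn–Laplace equation Δ_{H¹}u = 0: Div(B) = 0, where
(B₁,B₂,B₃) is the Noether current of
V₂ = (t−4xy)∂_x + (3x²−y²)∂_y − (2yt+2x³+2xy²)∂_t + 2yu∂_u. -/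
theorem conservation_law_V2
    (Ω : Set (ℝ × ℝ × ℝ)) (hΩ : IsOpen Ω)
    (u : ℝ × ℝ × ℝ → ℝ) (hu : ContDiffOn ℝ 2 u Ω)
    (hsol : ∀ p ∈ Ω, KohnLaplace u p = 0) :
    ∀ p ∈ Ω,
      pdx (fun q =>
        let x := q.1; let y := q.2.1; let t := q.2.2
        let ux := pdx u q; let uy := pdy u q; let ut := pdt u q; let v := u q;
        (-(1 / 2) * (t - 4 * x * y) * ux ^ 2
        + (1 / 2) * (t - 4 * x * y) * uy ^ 2
        + (2 * t * (x ^ 2 + 3 * y ^ 2) - 4 * x * y * (x ^ 2 + y ^ 2)) * ut ^ 2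
        - (3 * x ^ 2 - y ^ 2) * ux * uy
        + 2 * (x ^ 3 + t * y + x * y ^ 2) * ux * ut
        - 2 * (t * x - x ^ 2 * y - y ^ 3) * uy * ut
        + 2 * y * v * ux + 4 * y ^ 2 * v * ut)) p
      + pdy (fun q =>
        let x := q.1; let y := q.2.1; let t := q.2.2
        let ux := pdx u q; let uy := pdy u q; let ut := pdt u q; let v := u q;
        ((1 / 2) * (3 * x ^ 2 - y ^ 2) * ux ^ 2
        - (1 / 2) * (3 * x ^ 2 - y ^ 2) * uy ^ 2
        + 2 * (x ^ 4 - 2 * t * x * y - y ^ 4) * ut ^ 2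
        - (t - 4 * x * y) * ux * uy
        + 2 * (t * x - x ^ 2 * y - y ^ 3) * ux * ut
        + 2 * (x ^ 3 + t * y + x * y ^ 2) * uy * ut
        + 2 * y * v * uy - 4 * x * y * v * ut - v ^ 2)) p
      + pdt (fun q =>
        let x := q.1; let y := q.2.1; let t := q.2.2
        let ux := pdx u q; let uy := pdy u q; let ut := pdt u q; let v := u q;
        ((7 * x * y ^ 2 - x ^ 3 - 3 * t * y) * ux ^ 2
        + (5 * x ^ 3 - 3 * x * y ^ 2 - t * y) * uy ^ 2
        + 4 * (x ^ 2 + y ^ 2) * (x ^ 3 + t * y + x * y ^ 2) * ut ^ 2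
        + 2 * (t * x - 7 * x ^ 2 * y + y ^ 3) * ux * uy
        - 4 * (t - 4 * x * y) * (x ^ 2 + y ^ 2) * ux * ut
        - 4 * (3 * x ^ 4 + 2 * x ^ 2 * y ^ 2 - y ^ 4) * uy * ut
        + 2 * x * v ^ 2 + 4 * y ^ 2 * v * ux - 4 * x * y * v * uy
        + 8 * y * (x ^ 2 + y ^ 2) * v * ut)) p = 0 := by
  intro p hp
  have hmem : Ω ∈ nhds p := hΩ.mem_nhds hp
  have hC : ContDiffAt ℝ 2 u p := hu.contDiffAt hmem
  have hu1 : DifferentiableAt ℝ u p := hC.differentiableAt (by norm_num)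
  have hdf : DifferentiableAt ℝ (fderiv ℝ u) p :=
    (hC.fderiv_right (m := 1) (by norm_num)).differentiableAt (by norm_num)
  have key : ∀ (c w : ℝ×ℝ×ℝ), fderiv ℝ (fun q => fderiv ℝ u q c) p w
      = fderiv ℝ (fderiv ℝ u) p w c := by
    intro c w
    rw [fderiv_clm_apply hdf (differentiableAt_const c)]
    simp
  have kx : ∀ w, fderiv ℝ (pdx u) p w = fderiv ℝ (fderiv ℝ u) p w (1,0,0) := by
    intro w; exact key (1,0,0) w
  have ky : ∀ w, fderiv ℝ (pdy u) p w = fderiv ℝ (fderiv ℝ u) p w (0,1,0) := by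
    intro w; exact key (0,1,0) w
  have kt : ∀ w, fderiv ℝ (pdt u) p w = fderiv ℝ (fderiv ℝ u) p w (0,0,1) := by
    intro w; exact key (0,0,1) w
  have hsym := hC.isSymmSndFDerivAt (by simp [minSmoothness_of_isRCLikeNormedField])
  have s21 : fderiv ℝ (fderiv ℝ u) p ((0:ℝ),(1:ℝ),(0:ℝ)) ((1:ℝ),(0:ℝ),(0:ℝ))
      = fderiv ℝ (fderiv ℝ u) p (1,0,0) (0,1,0) := hsym _ _
  have s31 : fderiv ℝ (fderiv ℝ u) p ((0:ℝ),(0:ℝ),(1:ℝ)) ((1:ℝ),(0:ℝ),(0:ℝ))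
      = fderiv ℝ (fderiv ℝ u) p (1,0,0) (0,0,1) := hsym _ _
  have s32 : fderiv ℝ (fderiv ℝ u) p ((0:ℝ),(0:ℝ),(1:ℝ)) ((0:ℝ),(1:ℝ),(0:ℝ))
      = fderiv ℝ (fderiv ℝ u) p (0,1,0) (0,0,1) := hsym _ _
  have hpde := hsol p hp
  simp only [KohnLaplace, pdx, pdy, pdt, key, kx, ky, kt, s21, s31, s32] at hpde
  simp only [pdx, pdy, pdt]
  simp only [pow_succ, pow_zero, one_mul]
  simp (disch := fun_prop) only [fderiv_fun_mul, fderiv_fun_add, fderiv_fun_sub, fderiv_fun_const,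
    ContinuousLinearMap.add_apply, ContinuousLinearMap.smul_apply,
    ContinuousLinearMap.sub_apply, ContinuousLinearMap.zero_apply, Pi.zero_apply,
    smul_eq_mul, fd_coord1, fd_coord2, fd_coord3, key, kx, ky, kt, s21, s31, s32]
  linear_combination (2 * p.2.1 * u p - (p.2.2 - 4 * p.1 * p.2.1) * fderiv ℝ u p (1,0,0)
    - (3 * p.1 ^ 2 - p.2.1 ^ 2) * fderiv ℝ u p (0,1,0)
    + (2 * p.2.1 * p.2.2 + 2 * p.1 ^ 3 + 2 * p.1 * p.2.1 ^ 2) * fderiv ℝ u p (0,0,1)) * hpde
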